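/- The subgroup of GL(3,ℂ) generated by the three matrices σ₁ = diag(−1, 1, −1), σ₂ = −(1/2)·[[0, √2, −√2],[√2, 1, 1],[−√2, 1, 1]], and σ₃ = diag(−1, −1, 1) is isomorphic to the symmetric group S₄ on 4 letters. -/

import Mathlib

open Matrix Complex

noncomputable section

/-- σ₁ = diag(−1, 1, −1). -/
def m1 : Matrix (Fin 3) (Fin 3) ℂ := diagonal ![-1, 1, -1]

/-- σ₃ = diag(−1, −1, 1). -/
def m3 : Matrix (Fin 3) (Fin 3) ℂ := diagonal ![-1, -1, 1]

/-- σ₂ = −(1/2)·[[0, √2, −√2],[√2, 1, 1],[−√2, 1, 1]]. -/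
def m2 : Matrix (Fin 3) (Fin 3) ℂ :=
  -(1 / 2 : ℂ) •
    !![0, (Real.sqrt 2 : ℂ), -(Real.sqrt 2 : ℂ);
       (Real.sqrt 2 : ℂ), 1, 1;
       -(Real.sqrt 2 : ℂ), 1, 1]

namespace St10

def s : ℂ := (Real.sqrt 2 : ℝ)

lemma hs : s * s = 2 := by
  have : (Real.sqrt 2) * (Real.sqrt 2) = 2 := Real.mul_self_sqrt (by norm_num)
  simp only [s]
  norm_cast

def A : Matrix (Fin 3) (Fin 4) ℂ :=
  !![1/2, 1/2, -(1/2), -(1/2); s/2, -(s/2), 0, 0; 0, 0, -(s/2), s/2]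

def AT : Matrix (Fin 4) (Fin 3) ℂ :=
  !![1/2, s/2, 0; 1/2, -(s/2), 0; -(1/2), 0, -(s/2); -(1/2), 0, s/2]

lemma hAT : Aᵀ = AT := by
  ext i j
  fin_cases i <;> fin_cases j <;> (try simp [A, AT]) <;> rfl

def P (σ : Equiv.Perm (Fin 4)) : Matrix (Fin 4) (Fin 4) ℂ :=
  Matrix.of fun i j => if σ j = i then 1 else 0

def J : Matrix (Fin 4) (Fin 4) ℂ := Matrix.of fun _ _ => 1

lemma P_mul (σ τ : Equiv.Perm (Fin 4)) : P σ * P τ = P (σ * τ) := by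
  ext i j
  simp [P, Matrix.mul_apply, ite_mul, mul_ite, Finset.sum_ite_eq, Finset.sum_ite_eq']
  congr

lemma P_one : P 1 = 1 := by
  ext i j
  simp [P, Matrix.one_apply, eq_comm]

lemma P_J (σ : Equiv.Perm (Fin 4)) : P σ * J = J := by
  ext i j
  simp [P, J, Matrix.mul_apply, Equiv.apply_eq_iff_eq_symm_apply, Finset.sum_ite_eq, Finset.sum_ite_eq']

lemma J_P (σ : Equiv.Perm (Fin 4)) : J * P σ = J := by
  ext i j
  simp [P, J, Matrix.mul_apply, Finset.sum_ite_eq, Finset.sum_ite_eq']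

lemma hs2 : s ^ 2 = 2 := by rw [sq, hs]

lemma J_J : J * J = (4 : ℂ) • J := by
  ext i j
  simp [J, Matrix.mul_apply, Finset.sum_const, Finset.card_univ]

lemma A_J : A * J = 0 := by
  ext i j
  fin_cases i <;> fin_cases j <;>
    simp [A, J, Matrix.mul_apply, Fin.sum_univ_succ] <;> ring

lemma hAAT : A * AT = 1 := by
  ext i j
  fin_cases i <;> fin_cases j <;>
    simp [A, AT, Matrix.mul_apply, Fin.sum_univ_succ, Matrix.one_apply] <;>
    ring_nf <;> simp [hs2] <;> norm_num

lemma hATA : AT * A = 1 - (4 : ℂ)⁻¹ • J := by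
  ext i j
  fin_cases i <;> fin_cases j <;>
    simp [A, AT, J, Matrix.mul_apply, Fin.sum_univ_succ, Matrix.one_apply] <;>
    ring_nf <;> simp [hs2] <;> norm_num

lemma A_P_J (σ : Equiv.Perm (Fin 4)) : A * P σ * J = 0 := by
  rw [Matrix.mul_assoc, P_J, A_J]

def f (σ : Equiv.Perm (Fin 4)) : Matrix (Fin 3) (Fin 3) ℂ :=
  ((Equiv.Perm.sign σ : ℤ) : ℂ) • (A * P σ * AT)

lemma key (σ τ : Equiv.Perm (Fin 4)) :
    (A * P σ * AT) * (A * P τ * AT) = A * P (σ * τ) * AT := by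
  have h1 : (A * P σ * AT) * (A * P τ * AT) = A * P σ * (AT * A) * (P τ * AT) := by
    simp only [Matrix.mul_assoc]
  rw [h1, hATA, Matrix.mul_sub, Matrix.mul_smul, A_P_J, smul_zero, sub_zero,
    Matrix.mul_one, ← Matrix.mul_assoc, Matrix.mul_assoc A (P σ) (P τ), P_mul]

lemma f_one : f 1 = 1 := by
  simp [f, P_one, Matrix.mul_one, hAAT]

lemma f_mul (σ τ : Equiv.Perm (Fin 4)) : f (σ * τ) = f σ * f τ := by
  simp only [f, Matrix.smul_mul, Matrix.mul_smul, smul_smul, key]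
  congr 1
  rw [_root_.map_mul]
  push_cast
  ring

def F : Equiv.Perm (Fin 4) →* Matrix (Fin 3) (Fin 3) ℂ where
  toFun := f
  map_one' := f_one
  map_mul' := f_mul

lemma P01 : P (Equiv.swap (0:Fin 4) 1) = !![0,1,0,0; 1,0,0,0; 0,0,1,0; 0,0,0,1] := by
  ext i j
  fin_cases i <;> fin_cases j <;> norm_num [P, Equiv.swap_apply_def] <;> decide

lemma P12 : P (Equiv.swap (1:Fin 4) 2) = !![1,0,0,0; 0,0,1,0; 0,1,0,0; 0,0,0,1] := by
  ext i j
  fin_cases i <;> fin_cases j <;> norm_num [P, Equiv.swap_apply_def] <;> decide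

lemma P23 : P (Equiv.swap (2:Fin 4) 3) = !![1,0,0,0; 0,1,0,0; 0,0,0,1; 0,0,1,0] := by
  ext i j
  fin_cases i <;> fin_cases j <;> norm_num [P, Equiv.swap_apply_def] <;> simp [Fin.ext_iff]

lemma F_swap (x y : Fin 4) (h : x ≠ y) :
    F (Equiv.swap x y) = -(A * P (Equiv.swap x y) * AT) := by
  show f _ = _
  rw [f, Equiv.Perm.sign_swap h]
  simp

lemma hs2' : ((Real.sqrt 2 : ℝ) : ℂ) ^ 2 = 2 := hs2

set_option maxHeartbeats 2000000 in
lemma hF1 : F (Equiv.swap 0 1) = m1 := by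
  rw [F_swap 0 1 (by decide), P01]
  ext i j
  fin_cases i <;> fin_cases j <;>
    simp [A, AT, m1, Matrix.neg_apply, Matrix.mul_apply, Fin.sum_univ_four,
      Matrix.diagonal_apply] <;>
    (try rfl) <;> (try ring_nf) <;> (try simp [hs2]) <;> (try norm_num)

set_option maxHeartbeats 2000000 in
lemma hF3 : F (Equiv.swap 2 3) = m3 := by
  rw [F_swap 2 3 (by decide), P23]
  ext i j
  fin_cases i <;> fin_cases j <;>
    simp [A, AT, m3, Matrix.neg_apply, Matrix.mul_apply, Fin.sum_univ_four,
      Matrix.diagonal_apply] <;>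
    (try rfl) <;> (try ring_nf) <;> (try simp [hs2]) <;> (try norm_num)

set_option maxHeartbeats 2000000 in
lemma hF2 : F (Equiv.swap 1 2) = m2 := by
  rw [F_swap 1 2 (by decide), P12]
  ext i j
  fin_cases i <;> fin_cases j <;>
    simp [A, AT, m2, s, Matrix.neg_apply, Matrix.smul_apply, Matrix.mul_apply,
      Fin.sum_univ_four] <;>
    (try rfl) <;> (try simp [Matrix.vecHead, Matrix.vecTail]) <;>
    (try ring_nf) <;> (try simp [hs2']) <;> (try norm_num) <;>
    (try ring_nf) <;> (try simp [hs2']) <;> (try norm_num)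

lemma Q_P_Q (σ : Equiv.Perm (Fin 4)) :
    (1 - (4:ℂ)⁻¹ • J) * P σ * (1 - (4:ℂ)⁻¹ • J) = P σ - (4:ℂ)⁻¹ • J := by
  simp only [Matrix.sub_mul, Matrix.mul_sub, Matrix.one_mul, Matrix.mul_one,
    Matrix.smul_mul, Matrix.mul_smul, J_P, P_J, J_J, smul_smul]
  norm_num

lemma F_ker (σ : Equiv.Perm (Fin 4)) (h : F σ = 1) : σ = 1 := by
  have h' : ((Equiv.Perm.sign σ : ℤ) : ℂ) • (A * P σ * AT) = 1 := h
  have h2 : ((Equiv.Perm.sign σ : ℤ) : ℂ) • (P σ - (4:ℂ)⁻¹ • J) = 1 - (4:ℂ)⁻¹ • J := by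
    have := congrArg (fun M => AT * M * A) h'
    simp only [Matrix.mul_smul, Matrix.smul_mul, Matrix.mul_one] at this
    rw [← hATA]
    calc ((Equiv.Perm.sign σ : ℤ) : ℂ) • (P σ - (4:ℂ)⁻¹ • J)
        = ((Equiv.Perm.sign σ : ℤ) : ℂ) • ((1 - (4:ℂ)⁻¹ • J) * P σ * (1 - (4:ℂ)⁻¹ • J)) := by
          rw [Q_P_Q]
      _ = ((Equiv.Perm.sign σ : ℤ) : ℂ) • (AT * (A * P σ * AT) * A) := by
          rw [← hATA]; simp only [Matrix.mul_assoc]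
      _ = AT * A := by
          rw [← this]
  rcases Int.units_eq_one_or (Equiv.Perm.sign σ) with hε | hε
  · rw [hε] at h2
    simp only [Units.val_one, Int.cast_one, one_smul, sub_left_inj] at h2
    have heq : ∀ j, σ j = j := by
      intro j
      have := congrFun (congrFun h2 j) j
      simp only [P, Matrix.of_apply, Matrix.one_apply_eq] at this
      by_contra hne
      rw [if_neg hne] at this
      exact zero_ne_one this
    exact Equiv.ext heq
  · rw [hε] at h2
    have := congrFun (congrFun h2 0) 0
    simp only [P, J, Matrix.smul_apply, Matrix.sub_apply, Matrix.of_apply,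
      Matrix.one_apply_eq, Units.val_neg, Units.val_one, Int.cast_neg, Int.cast_one,
      neg_smul, one_smul, smul_eq_mul, mul_one, Matrix.neg_apply] at this
    by_cases h0 : σ 0 = 0 <;> simp [h0] at this <;> norm_num at this

end St10

open St10 in
/-- The subgroup of GL(3,ℂ) generated by σ₁, σ₂, σ₃ is isomorphic to the
symmetric group S₄ on 4 letters. -/
theorem stmt10 (a b c : GL (Fin 3) ℂ)
    (ha : (a : Matrix (Fin 3) (Fin 3) ℂ) = m1)
    (hb : (b : Matrix (Fin 3) (Fin 3) ℂ) = m2)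
    (hc : (c : Matrix (Fin 3) (Fin 3) ℂ) = m3) :
    Nonempty ((Subgroup.closure ({a, b, c} : Set (GL (Fin 3) ℂ))) ≃* Equiv.Perm (Fin 4)) := by
  let φ : Equiv.Perm (Fin 4) →* GL (Fin 3) ℂ := F.toHomUnits
  have hφ1 : φ (Equiv.swap 0 1) = a := Units.ext (by rw [MonoidHom.coe_toHomUnits, hF1, ha])
  have hφ2 : φ (Equiv.swap 1 2) = b := Units.ext (by rw [MonoidHom.coe_toHomUnits, hF2, hb])
  have hφ3 : φ (Equiv.swap 2 3) = c := Units.ext (by rw [MonoidHom.coe_toHomUnits, hF3, hc])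
  have hinj : Function.Injective φ := by
    rw [injective_iff_map_eq_one]
    intro σ h
    exact F_ker σ (congrArg Units.val h)
  have hS : Subgroup.closure (Set.range fun i : Fin 3 => Equiv.swap (i.castSucc) i.succ)
      = (⊤ : Subgroup (Equiv.Perm (Fin 4))) :=
    Subgroup.closure_eq_top_of_mclosure_eq_top (Equiv.Perm.mclosure_swap_castSucc_succ 3)
  have hrange : φ.range = Subgroup.closure ({a, b, c} : Set (GL (Fin 3) ℂ)) := by
    rw [MonoidHom.range_eq_map, ← hS, MonoidHom.map_closure]
    congr 1
    ext x
    constructor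
    · rintro ⟨y, ⟨i, rfl⟩, rfl⟩
      fin_cases i
      · left; exact hφ1
      · right; left; exact hφ2
      · right; right; exact hφ3
    · rintro (rfl | rfl | rfl)
      · exact ⟨_, ⟨0, rfl⟩, hφ1⟩
      · exact ⟨_, ⟨1, rfl⟩, hφ2⟩
      · exact ⟨_, ⟨2, rfl⟩, hφ3⟩
  exact ⟨((MonoidHom.ofInjective hinj).trans (MulEquiv.subgroupCongr hrange)).symm⟩
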